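/- Let ψ be a nontrivial good character of F of conductor 1, and let 𝓛(F,ψ) be the ℂ(Γ)-linear span of the functions f·ψ_a for f ∈ 𝓛(F) and a ∈ F. Then ∫^F admits exactly one extension to a ℂ(Γ)-linear functional on 𝓛(F,ψ) that is invariant under translation by elements of F. -/

import Mathlib

noncomputable section

open MeasureTheory

/-- A field `F` with a split valuation `ν : F^× → Γ` (split by `t`), with residue field `k`,
residue map `ρ : O_F → k`, where `Γ` has a minimal positive element `one`. -/
structure LiftSetup (Γ F k : Type*) [AddCommGroup Γ] [LinearOrder Γ] [IsOrderedAddMonoid Γ] [Field F] [Field k] where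
  /-- the valuation (recorded on nonzero elements) -/
  ν : F → Γ
  /-- the splitting homomorphism `t : Γ → F^×` -/
  t : Γ → F
  /-- the residue map (recorded on the valuation ring) -/
  ρ : F → k
  /-- the minimal positive element of `Γ` -/
  one : Γ
  one_pos : 0 < one
  one_min : ∀ γ : Γ, 0 < γ → one ≤ γ
  ν_mul : ∀ x y : F, x ≠ 0 → y ≠ 0 → ν (x * y) = ν x + ν y
  ν_add : ∀ x y : F, x ≠ 0 → y ≠ 0 → x + y ≠ 0 → min (ν x) (ν y) ≤ ν (x + y)
  t_ne : ∀ γ : Γ, t γ ≠ 0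
  t_add : ∀ γ δ : Γ, t (γ + δ) = t γ * t δ
  ν_t : ∀ γ : Γ, ν (t γ) = γ
  ρ_add : ∀ x y : F, (x = 0 ∨ 0 ≤ ν x) → (y = 0 ∨ 0 ≤ ν y) → ρ (x + y) = ρ x + ρ y
  ρ_mul : ∀ x y : F, (x = 0 ∨ 0 ≤ ν x) → (y = 0 ∨ 0 ≤ ν y) → ρ (x * y) = ρ x * ρ y
  ρ_one : ρ 1 = 1
  ρ_surj : ∀ u : k, ∃ x : F, (x = 0 ∨ 0 ≤ ν x) ∧ ρ x = u
  ρ_eq_zero : ∀ x : F, (x = 0 ∨ 0 ≤ ν x) → (ρ x = 0 ↔ (x = 0 ∨ 0 < ν x))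

namespace LiftSetup

variable {Γ F k : Type*} [AddCommGroup Γ] [LinearOrder Γ] [IsOrderedAddMonoid Γ] [Field F] [Field k]
variable (S : LiftSetup Γ F k)

/-- The ring of integers `O_F` of the valuation. -/
def integers : Set F := {x | x = 0 ∨ 0 ≤ S.ν x}

/-- The translated fractional ideal `a + t(γ)O_F`. -/
def fracIdeal (a : F) (γ : Γ) : Set F := {x | (x - a) * S.t (-γ) ∈ S.integers}

/-- The lift `f^{a,γ}` of a function `f` on the residue field `k`:
`f^{a,γ}(x) = f(ρ((x-a)t(-γ)))` for `x ∈ a + t(γ)O_F` and `0` otherwise. -/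
def lift {A : Type*} [Zero A] (f : k → A) (a : F) (γ : Γ) : F → A :=
  (S.fracIdeal a γ).indicator fun x => f (S.ρ ((x - a) * S.t (-γ)))

/-- The homomorphism `η : F^× → k^×`, `x ↦ ρ(x t(-ν x))`. -/
def η (x : F) : k := S.ρ (x * S.t (-S.ν x))

end LiftSetup

section CGamma

variable (Γ : Type*) [AddCommGroup Γ] [LinearOrder Γ] [IsOrderedAddMonoid Γ]

instance : IsDomain (AddMonoidAlgebra ℂ Γ) := NoZeroDivisors.to_isDomain _

/-- `ℂ(Γ)`: the field of fractions of the complex group algebra of `Γ`. -/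
abbrev CGamma : Type _ := FractionRing (AddMonoidAlgebra ℂ Γ)

/-- The canonical embedding `ℂ → ℂ(Γ)`. -/
def embC : ℂ →+* CGamma Γ :=
  (algebraMap (AddMonoidAlgebra ℂ Γ) (CGamma Γ)).comp AddMonoidAlgebra.singleZeroRingHom

variable {Γ}

/-- The basis element `X^γ` of `ℂ(Γ)`. -/
def Xp (γ : Γ) : CGamma Γ :=
  algebraMap (AddMonoidAlgebra ℂ Γ) (CGamma Γ) (AddMonoidAlgebra.single γ 1)

end CGamma

section GoodChar

variable {Γ F k : Type*} [AddCommGroup Γ] [LinearOrder Γ] [IsOrderedAddMonoid Γ] [Field F] [Field k] [TopologicalSpace k]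

/-- `ψ` is a nontrivial good character of `F` of conductor `𝔣`: a homomorphism from the
additive group of `F` to the complex unit circle, trivial on `t(𝔣)O_F`, nontrivial on
`t(𝔣-1)O_F`, whose induced map `ψ̄` on the residue field `k` (given by
`ψ̄(ρ(x)) = ψ(t(𝔣-1)x)` for `x ∈ O_F`) is well defined and continuous. -/
def LiftSetup.IsGoodCharacter (S : LiftSetup Γ F k) (ψ : F → ℂ) (𝔣 : Γ) : Prop :=
  (∀ x y : F, ψ (x + y) = ψ x * ψ y) ∧
  (∀ x : F, ‖ψ x‖ = 1) ∧
  (∀ x ∈ S.integers, ψ (S.t 𝔣 * x) = 1) ∧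
  (∃ x ∈ S.integers, ψ (S.t (𝔣 - S.one) * x) ≠ 1) ∧
  (∃ ψbar : k → ℂ, Continuous ψbar ∧
    ∀ x ∈ S.integers, ψbar (S.ρ x) = ψ (S.t (𝔣 - S.one) * x))

end GoodChar

section LFmu

variable {Γ F k : Type*} [AddCommGroup Γ] [LinearOrder Γ] [IsOrderedAddMonoid Γ] [Field F] [Field k]
  [MeasurableSpace k]

open MeasureTheory

/-- `𝓛(F)`: the `ℂ(Γ)`-span of the lifts of Haar-integrable functions on `k`. -/
def LFmu (S : LiftSetup Γ F k) (μ : Measure k) : Submodule (CGamma Γ) (F → CGamma Γ) :=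
  Submodule.span (CGamma Γ)
    {g | ∃ f : k → ℂ, Integrable f μ ∧ ∃ (a : F) (γ : Γ),
        g = S.lift (fun u => embC Γ (f u)) a γ}

theorem liftC_mem_mu (S : LiftSetup Γ F k) (μ : Measure k)
    {f : k → ℂ} (hf : Integrable f μ) (a : F) (γ : Γ) :
    S.lift (fun u => embC Γ (f u)) a γ ∈ LFmu S μ :=
  Submodule.subset_span ⟨f, hf, a, γ, rfl⟩

/-- `𝓛^γ`: the complex span of the lifts of Haar-integrable functions at height `γ`. -/
def Lheight (S : LiftSetup Γ F k) (μ : Measure k) (γ : Γ) : Submodule ℂ (F → ℂ) :=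
  Submodule.span ℂ {g | ∃ f : k → ℂ, Integrable f μ ∧ ∃ a : F, g = S.lift f a γ}

end LFmu

section LFpsi

variable {Γ F k : Type*} [AddCommGroup Γ] [LinearOrder Γ] [IsOrderedAddMonoid Γ] [Field F] [Field k]
  [MeasurableSpace k]

open MeasureTheory

/-- `𝓛(F,ψ)`: the `ℂ(Γ)`-span of the functions `f·ψ_a` for `f ∈ 𝓛(F)`, `a ∈ F`. -/
def LFpsi (S : LiftSetup Γ F k) (μ : Measure k) (ψ : F → ℂ) :
    Submodule (CGamma Γ) (F → CGamma Γ) :=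
  Submodule.span (CGamma Γ)
    {g | ∃ f ∈ LFmu S μ, ∃ a : F, g = fun x => embC Γ (ψ (a * x)) * f x}

end LFpsi

section Auxiliary

open MeasureTheory

variable {Γ F k : Type*} [AddCommGroup Γ] [LinearOrder Γ] [IsOrderedAddMonoid Γ] [Field F] [Field k]

namespace LiftSetup

variable (S : LiftSetup Γ F k)

lemma nu_one_eq : S.ν 1 = 0 := by
  have h := S.ν_mul 1 1 one_ne_zero one_ne_zero
  rw [mul_one] at h
  exact (left_eq_add.mp h)

lemma nu_neg_one : S.ν (-1 : F) = 0 := by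
  have h := S.ν_mul (-1) (-1) (by norm_num) (by norm_num)
  rw [neg_mul_neg, one_mul, S.nu_one_eq] at h
  rcases lt_trichotomy (S.ν (-1 : F)) 0 with h1 | h1 | h1
  · exact absurd h.symm (ne_of_lt (add_neg h1 h1))
  · exact h1
  · exact absurd h.symm (ne_of_gt (add_pos h1 h1))

lemma nu_neg {x : F} (hx : x ≠ 0) : S.ν (-x) = S.ν x := by
  have h := S.ν_mul (-1) x (by norm_num) hx
  rw [neg_one_mul, S.nu_neg_one, zero_add] at h
  exact h

lemma nu_inv {x : F} (hx : x ≠ 0) : S.ν x⁻¹ = -S.ν x := by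
  have h := S.ν_mul x x⁻¹ hx (inv_ne_zero hx)
  rw [mul_inv_cancel₀ hx, S.nu_one_eq] at h
  exact eq_neg_of_add_eq_zero_right h.symm

lemma t_zero : S.t 0 = 1 := by
  have h := S.t_add 0 0
  rw [add_zero] at h
  have h2 : S.t 0 * 1 = S.t 0 * S.t 0 := by rw [mul_one]; exact h
  exact (mul_left_cancel₀ (S.t_ne 0) h2).symm

lemma t_mul_t_neg (γ : Γ) : S.t γ * S.t (-γ) = 1 := by
  rw [← S.t_add, add_neg_cancel, S.t_zero]

lemma zero_mem_integers : (0 : F) ∈ S.integers := Or.inl rfl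

lemma mem_integers_of_nu {x : F} (h : 0 ≤ S.ν x) : x ∈ S.integers := Or.inr h

lemma neg_mem_integers {x : F} (hx : x ∈ S.integers) : -x ∈ S.integers := by
  rcases hx with rfl | hx
  · simpa using S.zero_mem_integers
  · rcases eq_or_ne x 0 with rfl | hne
    · simpa using S.zero_mem_integers
    · exact Or.inr (by rw [S.nu_neg hne]; exact hx)

lemma add_mem_integers {x y : F} (hx : x ∈ S.integers) (hy : y ∈ S.integers) :
    x + y ∈ S.integers := by
  rcases hx with rfl | hx
  · simpa using hy
  rcases hy with rfl | hy
  · simpa using (show x ∈ S.integers from Or.inr hx)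
  rcases eq_or_ne x 0 with rfl | hxne
  · simpa using (show y ∈ S.integers from Or.inr hy)
  rcases eq_or_ne y 0 with rfl | hyne
  · simpa using (show x ∈ S.integers from Or.inr hx)
  rcases eq_or_ne (x + y) 0 with h0 | h0
  · exact Or.inl h0
  · refine Or.inr (le_trans ?_ (S.ν_add x y hxne hyne h0))
    exact le_min hx hy

lemma mul_mem_integers {x y : F} (hx : x ∈ S.integers) (hy : y ∈ S.integers) :
    x * y ∈ S.integers := by
  rcases hx with rfl | hx
  · simpa using S.zero_mem_integers
  rcases hy with rfl | hy
  · simpa using S.zero_mem_integers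
  rcases eq_or_ne x 0 with rfl | hxne
  · simpa using S.zero_mem_integers
  rcases eq_or_ne y 0 with rfl | hyne
  · simpa using S.zero_mem_integers
  refine Or.inr ?_
  rw [S.ν_mul x y hxne hyne]
  exact add_nonneg hx hy

lemma rho_zero : S.ρ 0 = 0 :=
  (S.ρ_eq_zero 0 (Or.inl rfl)).mpr (Or.inl rfl)

lemma rho_of_pos {z : F} (hz : z = 0 ∨ 0 < S.ν z) : S.ρ z = 0 := by
  refine (S.ρ_eq_zero z ?_).mpr hz
  rcases hz with rfl | hz
  · exact Or.inl rfl
  · exact Or.inr hz.le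

lemma lift_apply_mem {A : Type*} [Zero A] (f : k → A) {b : F} {γ : Γ} {x : F}
    (h : x ∈ S.fracIdeal b γ) :
    S.lift f b γ x = f (S.ρ ((x - b) * S.t (-γ))) := Set.indicator_of_mem h _

lemma lift_apply_not_mem {A : Type*} [Zero A] (f : k → A) {b : F} {γ : Γ} {x : F}
    (h : x ∉ S.fracIdeal b γ) : S.lift f b γ x = 0 := Set.indicator_of_notMem h _

lemma lift_shift {A : Type*} [Zero A] (f : k → A) (b : F) (γ : Γ) (τ x : F) :
    S.lift f b γ (x + τ) = S.lift f (b - τ) γ x := by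
  have hxy : x + τ - b = x - (b - τ) := by ring
  have hmem : (x + τ ∈ S.fracIdeal b γ) ↔ (x ∈ S.fracIdeal (b - τ) γ) := by
    show ((x + τ - b) * S.t (-γ) ∈ S.integers) ↔ ((x - (b - τ)) * S.t (-γ) ∈ S.integers)
    rw [hxy]
  by_cases h : x + τ ∈ S.fracIdeal b γ
  · rw [S.lift_apply_mem f h, S.lift_apply_mem f (hmem.mp h), hxy]
  · rw [S.lift_apply_not_mem f h, S.lift_apply_not_mem f (fun hc => h (hmem.mpr hc))]

lemma lift_small_shift {A : Type*} [Zero A] (f : k → A) (b : F) (γ : Γ) {w : F}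
    (hw : w ≠ 0) (hν : γ < S.ν w) (x : F) :
    S.lift f b γ (x + w) = S.lift f b γ x := by
  have htne := S.t_ne (-γ)
  have hzne : w * S.t (-γ) ≠ 0 := mul_ne_zero hw htne
  have hzv : 0 < S.ν (w * S.t (-γ)) := by
    rw [S.ν_mul w _ hw htne, S.ν_t]
    simpa using sub_pos.mpr hν
  have hzO : w * S.t (-γ) ∈ S.integers := Or.inr hzv.le
  have hzρ : S.ρ (w * S.t (-γ)) = 0 := S.rho_of_pos (Or.inr hzv)
  have hxy : (x + w - b) * S.t (-γ) = (x - b) * S.t (-γ) + w * S.t (-γ) := by ring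
  have hmemiff : (x + w ∈ S.fracIdeal b γ) ↔ (x ∈ S.fracIdeal b γ) := by
    constructor
    · intro h
      have h' : (x + w - b) * S.t (-γ) ∈ S.integers := h
      have : (x - b) * S.t (-γ) = (x + w - b) * S.t (-γ) + -(w * S.t (-γ)) := by
        rw [hxy]; ring
      show (x - b) * S.t (-γ) ∈ S.integers
      rw [this]
      exact S.add_mem_integers h' (S.neg_mem_integers hzO)
    · intro h
      show (x + w - b) * S.t (-γ) ∈ S.integers
      rw [hxy]
      exact S.add_mem_integers h hzO
  by_cases h : x ∈ S.fracIdeal b γ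
  · rw [S.lift_apply_mem f (hmemiff.mpr h), S.lift_apply_mem f h]
    congr 1
    have hmem : (x - b) * S.t (-γ) ∈ S.integers := h
    rw [hxy, S.ρ_add _ _ hmem hzO, hzρ, add_zero]
  · rw [S.lift_apply_not_mem f (fun hc => h (hmemiff.mp hc)), S.lift_apply_not_mem f h]

end LiftSetup

end Auxiliary
section Auxiliary2

open MeasureTheory

variable {Γ F k : Type*} [AddCommGroup Γ] [LinearOrder Γ] [IsOrderedAddMonoid Γ] [Field F] [Field k]

/-- congruence helper for linear functionals on submodules -/
lemma Jcongr {R M N : Type*} [Ring R] [AddCommGroup M] [Module R M]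
    [AddCommGroup N] [Module R N] {p : Submodule R M} (J : p →ₗ[R] N)
    {x y : M} (h : x = y) (hx : x ∈ p) (hy : y ∈ p) : J ⟨x, hx⟩ = J ⟨y, hy⟩ := by
  subst h; rfl

lemma embC_injective : Function.Injective (embC Γ) := (embC Γ).injective

section psi

variable [TopologicalSpace k] (S : LiftSetup Γ F k) {ψ : F → ℂ}
  (hψ : S.IsGoodCharacter ψ S.one)

include hψ

lemma psi_ne_zero (x : F) : ψ x ≠ 0 := by
  intro h
  have := hψ.2.1 x
  rw [h] at this
  simp at this

lemma psi_zero : ψ 0 = 1 := by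
  have h := hψ.1 0 0
  rw [add_zero] at h
  have h2 : ψ 0 * 1 = ψ 0 * ψ 0 := by rw [mul_one]; exact h
  exact (mul_left_cancel₀ (psi_ne_zero S hψ 0) h2).symm

lemma psibar_exists : ∃ ψb : k → ℂ, Continuous ψb ∧
    (∀ x ∈ S.integers, ψb (S.ρ x) = ψ x) ∧ (∀ v : k, ‖ψb v‖ = 1) := by
  obtain ⟨ψb, hc, hv⟩ := hψ.2.2.2.2
  have hv' : ∀ x ∈ S.integers, ψb (S.ρ x) = ψ x := by
    intro x hx
    have := hv x hx
    rwa [sub_self, S.t_zero, one_mul] at this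
  refine ⟨ψb, hc, hv', fun v => ?_⟩
  obtain ⟨x, hx, rfl⟩ := S.ρ_surj v
  rw [hv' x hx]
  exact hψ.2.1 x

lemma exists_psi_ne_one : ∃ x₀ : F, ψ x₀ ≠ 1 ∧ x₀ ≠ 0 ∧ 0 ≤ S.ν x₀ := by
  obtain ⟨x, hx, hne⟩ := hψ.2.2.2.1
  rw [sub_self, S.t_zero, one_mul] at hne
  have hx0 : x ≠ 0 := by
    rintro rfl
    exact hne (psi_zero S hψ)
  rcases hx with rfl | hx
  · exact absurd rfl hx0
  · exact ⟨x, hne, hx0, hx⟩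

end psi

end Auxiliary2
section Auxiliary3
set_option linter.unusedSectionVars false

open MeasureTheory

variable {Γ F k : Type*} [AddCommGroup Γ] [LinearOrder Γ] [IsOrderedAddMonoid Γ] [Field F] [Field k]
  [TopologicalSpace k] [IsTopologicalRing k] [MeasurableSpace k] [BorelSpace k]
  (S : LiftSetup Γ F k) (μ : Measure k) {ψ : F → ℂ}

/-- The generating set of `LFmu`. -/
def liftGen : Set (F → CGamma Γ) :=
  {g | ∃ f : k → ℂ, Integrable f μ ∧ ∃ (a : F) (γ : Γ),
      g = S.lift (fun u => embC Γ (f u)) a γ}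

lemma LFmu_eq_span : LFmu S μ = Submodule.span (CGamma Γ) (liftGen S μ) := rfl

/-- The set of "oscillating" generators of `LFpsi`. -/
def G1set (ψ : F → ℂ) : Set (F → CGamma Γ) :=
  {g | ∃ (a b : F) (γ : Γ) (f : k → ℂ), a ≠ 0 ∧ Integrable f μ ∧
      S.ν a + γ + S.one ≤ 0 ∧
      g = fun x => embC Γ (ψ (a * x)) * S.lift (fun u => embC Γ (f u)) b γ x}

variable (hψ : S.IsGoodCharacter ψ S.one)

include hψ

/-- the twist lemma: for `ν(a) + γ ≥ 0`, `ψ_a · f^{b,γ}` is again in `𝓛(F)`. -/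
lemma twist_mem {a : F} {γ : Γ} (ha : a ≠ 0) (hm : 0 ≤ S.ν a + γ)
    {f : k → ℂ} (hf : Integrable f μ) (b : F) :
    (fun x => embC Γ (ψ (a * x)) * S.lift (fun u => embC Γ (f u)) b γ x) ∈ LFmu S μ := by
  obtain ⟨ψb, hψbc, hψbv, hψbabs⟩ := psibar_exists S hψ
  set c : k := S.ρ (a * S.t γ) with hc
  set g : k → ℂ := fun u => ψb (c * u) * f u with hg
  have hgint : Integrable g μ := by
    refine hf.bdd_mul (c := 1) ?_ (Filter.Eventually.of_forall fun u => ?_)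
    · exact (hψbc.comp (continuous_mul_left c)).aestronglyMeasurable
    · rw [hψbabs]
  have hatne : a * S.t γ ≠ 0 := mul_ne_zero ha (S.t_ne γ)
  have hatO : a * S.t γ ∈ S.integers := by
    refine Or.inr ?_
    rw [S.ν_mul a _ ha (S.t_ne γ), S.ν_t]
    exact hm
  have key : (fun x => embC Γ (ψ (a * x)) * S.lift (fun u => embC Γ (f u)) b γ x)
      = embC Γ (ψ (a * b)) • S.lift (fun u => embC Γ (g u)) b γ := by
    funext x
    by_cases hx : x ∈ S.fracIdeal b γ
    · have hxO : (x - b) * S.t (-γ) ∈ S.integers := hx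
      set u : k := S.ρ ((x - b) * S.t (-γ)) with hu
      rw [S.lift_apply_mem _ hx, Pi.smul_apply, S.lift_apply_mem _ hx, smul_eq_mul]
      have hy : a * (x - b) = (a * S.t γ) * ((x - b) * S.t (-γ)) := by
        have := S.t_mul_t_neg γ
        calc a * (x - b) = a * (x - b) * (S.t γ * S.t (-γ)) := by rw [this, mul_one]
          _ = (a * S.t γ) * ((x - b) * S.t (-γ)) := by ring
      have hyO : a * (x - b) ∈ S.integers := by
        rw [hy]; exact S.mul_mem_integers hatO hxO
      have hψy : ψ (a * (x - b)) = ψb (c * u) := by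
        rw [← hψbv _ hyO, hy, S.ρ_mul _ _ hatO hxO]
      have hsplit : ψ (a * x) = ψ (a * b) * ψb (c * u) := by
        have : a * x = a * b + a * (x - b) := by ring
        rw [this, hψ.1, hψy]
      rw [hsplit, map_mul]
      show (embC Γ) (ψ (a * b)) * (embC Γ) (ψb (c * u)) * (embC Γ) (f u)
          = (embC Γ) (ψ (a * b)) * (embC Γ) (ψb (c * u) * f u)
      rw [map_mul, mul_assoc]
    · rw [S.lift_apply_not_mem _ hx, Pi.smul_apply, S.lift_apply_not_mem _ hx,
        mul_zero, smul_zero]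
  rw [key]
  exact Submodule.smul_mem _ _ (liftC_mem_mu S μ hgint b γ)

/-- multiplication by `ψ_0` is the identity. -/
lemma mul_psi_zero (g : F → CGamma Γ) :
    (fun x => embC Γ (ψ (0 * x)) * g x) = g := by
  funext x
  rw [zero_mul, psi_zero S hψ, map_one, one_mul]

/-- shifting a generator of `LFpsi` by `τ`. -/
lemma gen_shift (a b : F) (γ : Γ) (f : k → ℂ) (τ : F) :
    (fun x => (fun y => embC Γ (ψ (a * y)) * S.lift (fun u => embC Γ (f u)) b γ y) (x + τ))
    = embC Γ (ψ (a * τ)) •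
      (fun x => embC Γ (ψ (a * x)) * S.lift (fun u => embC Γ (f u)) (b - τ) γ x) := by
  funext x
  beta_reduce
  rw [Pi.smul_apply, smul_eq_mul, S.lift_shift, ← mul_assoc, ← map_mul]
  congr 2
  rw [← hψ.1]
  congr 1
  ring

/-- shifting a generator of `LFpsi` by a small `w` only multiplies it by `ψ(aw)`. -/
lemma gen_small_shift (a b : F) (γ : Γ) (f : k → ℂ) {w : F} (hw : w ≠ 0)
    (hν : γ < S.ν w) :
    (fun x => (fun y => embC Γ (ψ (a * y)) * S.lift (fun u => embC Γ (f u)) b γ y) (x + w))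
    = embC Γ (ψ (a * w)) •
      (fun x => embC Γ (ψ (a * x)) * S.lift (fun u => embC Γ (f u)) b γ x) := by
  funext x
  beta_reduce
  rw [Pi.smul_apply, smul_eq_mul, S.lift_small_shift _ _ _ hw hν, ← mul_assoc, ← map_mul]
  congr 2
  rw [← hψ.1]
  congr 1
  ring

end Auxiliary3
section Auxiliary4
set_option linter.unusedSectionVars false

open MeasureTheory

variable {Γ F k : Type*} [AddCommGroup Γ] [LinearOrder Γ] [IsOrderedAddMonoid Γ] [Field F] [Field k]
  [TopologicalSpace k] [IsTopologicalRing k] [MeasurableSpace k] [BorelSpace k]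
  (S : LiftSetup Γ F k) (μ : Measure k)
  (J : LFmu S μ →ₗ[CGamma Γ] CGamma Γ)
  (hJ : ∀ (f : k → ℂ) (hf : Integrable f μ) (a : F) (γ : Γ),
      J ⟨S.lift (fun u => embC Γ (f u)) a γ, liftC_mem_mu S μ hf a γ⟩
        = embC Γ (∫ u, f u ∂μ) * Xp γ)

include hJ

/-- `∫^F` is invariant under translations on `𝓛(F)`. -/
lemma J_translate (τ : F) {h : F → CGamma Γ} (hh : h ∈ LFmu S μ) :
    ∃ hh' : (fun x => h (x + τ)) ∈ LFmu S μ,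
      J ⟨fun x => h (x + τ), hh'⟩ = J ⟨h, hh⟩ := by
  induction hh using Submodule.span_induction with
  | mem g hg =>
    obtain ⟨f, hf, a, γ, rfl⟩ := hg
    have he : (fun x => S.lift (fun u => embC Γ (f u)) a γ (x + τ))
        = S.lift (fun u => embC Γ (f u)) (a - τ) γ :=
      funext fun x => S.lift_shift _ a γ τ x
    refine ⟨he ▸ liftC_mem_mu S μ hf (a - τ) γ, ?_⟩
    rw [Jcongr J he _ (liftC_mem_mu S μ hf (a - τ) γ), hJ f hf (a - τ) γ]
    exact (hJ f hf a γ).symm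
  | zero =>
    refine ⟨Submodule.zero_mem _, ?_⟩
    rw [Jcongr J (show (fun x => (0 : F → CGamma Γ) (x + τ)) = 0 from rfl) _
      (Submodule.zero_mem _)]
  | add u v hu hv pu pv =>
    obtain ⟨hu', eu⟩ := pu
    obtain ⟨hv', ev⟩ := pv
    refine ⟨Submodule.add_mem _ hu' hv', ?_⟩
    have h1 : (⟨fun x => (u + v) (x + τ), Submodule.add_mem _ hu' hv'⟩ : LFmu S μ)
        = ⟨fun x => u (x + τ), hu'⟩ + ⟨fun x => v (x + τ), hv'⟩ := rfl
    have h2 : (⟨u + v, Submodule.add_mem _ hu hv⟩ : LFmu S μ) = ⟨u, hu⟩ + ⟨v, hv⟩ := rfl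
    rw [h1, h2, map_add, map_add, eu, ev]
  | smul r u hu pu =>
    obtain ⟨hu', eu⟩ := pu
    refine ⟨Submodule.smul_mem _ r hu', ?_⟩
    have h1 : (⟨fun x => (r • u) (x + τ), Submodule.smul_mem _ r hu'⟩ : LFmu S μ)
        = r • ⟨fun x => u (x + τ), hu'⟩ := rfl
    have h2 : (⟨r • u, Submodule.smul_mem _ r hu⟩ : LFmu S μ) = r • ⟨u, hu⟩ := rfl
    rw [h1, h2, LinearMap.map_smul, LinearMap.map_smul, eu]

end Auxiliary4
section Auxiliary5
set_option linter.unusedSectionVars false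
set_option maxHeartbeats 1000000
set_option synthInstance.maxHeartbeats 400000

open MeasureTheory

variable {Γ F k : Type*} [AddCommGroup Γ] [LinearOrder Γ] [IsOrderedAddMonoid Γ] [Field F] [Field k]
  [TopologicalSpace k] [IsTopologicalRing k] [MeasurableSpace k] [BorelSpace k]
  (S : LiftSetup Γ F k) (μ : Measure k) {ψ : F → ℂ}
  (hψ : S.IsGoodCharacter ψ S.one)
  (J : LFmu S μ →ₗ[CGamma Γ] CGamma Γ)
  (hJ : ∀ (f : k → ℂ) (hf : Integrable f μ) (a : F) (γ : Γ),
      J ⟨S.lift (fun u => embC Γ (f u)) a γ, liftC_mem_mu S μ hf a γ⟩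
        = embC Γ (∫ u, f u ∂μ) * Xp γ)

include hψ hJ

/-- Key lemma: a finite linear combination of oscillating generators which happens to lie
in `𝓛(F)` is annihilated by `∫^F`. -/
lemma star_aux (n : ℕ) (T : Finset (F → CGamma Γ))
    (a b : (F → CGamma Γ) → F) (γ : (F → CGamma Γ) → Γ)
    (f : (F → CGamma Γ) → (k → ℂ)) (c : (F → CGamma Γ) → CGamma Γ)
    (hcard : T.card ≤ n)
    (hcond : ∀ i ∈ T, a i ≠ 0 ∧ Integrable (f i) μ ∧ S.ν (a i) + γ i + S.one ≤ 0)
    (hmem : (∑ i ∈ T, c i •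
        fun x => embC Γ (ψ (a i * x)) * S.lift (fun u => embC Γ (f i u)) (b i) (γ i) x)
      ∈ LFmu S μ) :
    J ⟨_, hmem⟩ = 0 := by
  classical
  induction n generalizing T c with
  | zero =>
    have hT : T = ∅ := Finset.card_eq_zero.mp (Nat.le_zero.mp hcard)
    subst hT
    rw [Jcongr J (Finset.sum_empty) _ (Submodule.zero_mem _)]
    exact map_zero J
  | succ n ih =>
    rcases T.eq_empty_or_nonempty with rfl | hne
    · rw [Jcongr J (Finset.sum_empty) _ (Submodule.zero_mem _)]
      exact map_zero J
    obtain ⟨j, hjT, hjmin⟩ := T.exists_min_image (fun i => S.ν (a i)) hne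
    obtain ⟨x₀, hx₀ne1, hx₀ne0, hx₀ν⟩ := exists_psi_ne_one S hψ
    have hajne : a j ≠ 0 := (hcond j hjT).1
    set w : F := x₀ * (a j)⁻¹ with hw
    have hwne : w ≠ 0 := mul_ne_zero hx₀ne0 (inv_ne_zero hajne)
    have hwv : S.ν w = S.ν x₀ - S.ν (a j) := by
      rw [hw, S.ν_mul _ _ hx₀ne0 (inv_ne_zero hajne), S.nu_inv hajne, sub_eq_add_neg]
    have hsmall : ∀ i ∈ T, γ i < S.ν w := by
      intro i hiT
      have h1 : S.ν (a i) + γ i + S.one ≤ 0 := (hcond i hiT).2.2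
      have h2 : γ i + S.one ≤ -S.ν (a i) := by
        have h3 : S.ν (a i) + (γ i + S.one) ≤ 0 := by rw [← add_assoc]; exact h1
        have := add_le_add_left h3 (-S.ν (a i))
        simpa using this
      have h4 : -S.ν (a i) ≤ -S.ν (a j) := neg_le_neg (hjmin i hiT)
      have h5 : -S.ν (a j) ≤ S.ν w := by
        rw [hwv, sub_eq_add_neg]
        simpa using add_le_add_right hx₀ν (-S.ν (a j))
      calc γ i < γ i + S.one := lt_add_of_pos_right _ S.one_pos
        _ ≤ -S.ν (a i) := h2
        _ ≤ S.ν w := le_trans h4 h5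
    set gfun : (F → CGamma Γ) → (F → CGamma Γ) :=
      fun i => fun x => embC Γ (ψ (a i * x)) * S.lift (fun u => embC Γ (f i u)) (b i) (γ i) x
      with hgfun
    set h0 : F → CGamma Γ := ∑ i ∈ T, c i • gfun i with hh0
    obtain ⟨hmem2, hJtr⟩ := J_translate S μ J hJ w hmem
    have key1 : (fun x => h0 (x + w)) = ∑ i ∈ T, (c i * embC Γ (ψ (a i * w))) • gfun i := by
      funext x
      rw [Finset.sum_apply]
      have : h0 (x + w) = ∑ i ∈ T, (c i • gfun i) (x + w) := by
        rw [hh0, Finset.sum_apply]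
      rw [this]
      refine Finset.sum_congr rfl fun i hiT => ?_
      have hshift := gen_small_shift S hψ (a i) (b i) (γ i) (f i) hwne (hsmall i hiT)
      have hval : gfun i (x + w) = embC Γ (ψ (a i * w)) * gfun i x := by
        have := congrFun hshift x
        simpa [Pi.smul_apply, smul_eq_mul, hgfun] using this
      rw [Pi.smul_apply, Pi.smul_apply, smul_eq_mul, smul_eq_mul, hval]
      ring
    set ej : CGamma Γ := embC Γ (ψ (a j * w)) with hej
    set h1 : F → CGamma Γ := (fun x => h0 (x + w)) - ej • h0 with hh1
    have key2 : h1 = ∑ i ∈ T.erase j,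
        (c i * (embC Γ (ψ (a i * w)) - ej)) • gfun i := by
      rw [hh1, key1, hh0, Finset.smul_sum, ← Finset.sum_sub_distrib]
      rw [Finset.sum_erase T (by rw [hej]; simp)]
      refine Finset.sum_congr rfl fun i hiT => ?_
      rw [smul_smul, ← sub_smul]
      congr 1
      ring
    have hmem1 : h1 ∈ LFmu S μ := Submodule.sub_mem _ hmem2 (Submodule.smul_mem _ _ hmem)
    have hmem1' : (∑ i ∈ T.erase j,
        (c i * (embC Γ (ψ (a i * w)) - ej)) • gfun i) ∈ LFmu S μ := key2 ▸ hmem1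
    have hcard' : (T.erase j).card ≤ n := by
      have := Finset.card_erase_of_mem hjT
      omega
    have hzero : J ⟨_, hmem1'⟩ = 0 :=
      ih (T.erase j) (fun i => c i * (embC Γ (ψ (a i * w)) - ej)) hcard'
        (fun i hiT => hcond i (Finset.mem_of_mem_erase hiT)) hmem1'
    have hJh1 : J ⟨h1, hmem1⟩ = (1 - ej) * J ⟨h0, hmem⟩ := by
      have hsplit : (⟨h1, hmem1⟩ : LFmu S μ)
          = ⟨fun x => h0 (x + w), hmem2⟩ - ej • ⟨h0, hmem⟩ := rfl
      rw [hsplit, map_sub, LinearMap.map_smul, hJtr, smul_eq_mul]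
      ring
    have hJh1' : J ⟨h1, hmem1⟩ = 0 := by
      rw [Jcongr J key2 hmem1 hmem1']
      exact hzero
    have hajw : a j * w = x₀ := by
      rw [hw]
      field_simp
    have hejne : ej ≠ 1 := by
      rw [hej, hajw]
      intro hc
      exact hx₀ne1 (embC_injective (by rw [hc, map_one]))
    have h1ej : (1 : CGamma Γ) - ej ≠ 0 := sub_ne_zero.mpr (Ne.symm hejne)
    have := hJh1.symm.trans hJh1'
    rcases mul_eq_zero.mp this with hc | hc
    · exact absurd hc h1ej
    · exact hc

end Auxiliary5
section Auxiliary6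
set_option linter.unusedSectionVars false
set_option maxHeartbeats 1000000
set_option synthInstance.maxHeartbeats 400000

open MeasureTheory

variable {Γ F k : Type*} [AddCommGroup Γ] [LinearOrder Γ] [IsOrderedAddMonoid Γ] [Field F] [Field k]
  [TopologicalSpace k] [IsTopologicalRing k] [MeasurableSpace k] [BorelSpace k]
  (S : LiftSetup Γ F k) (μ : Measure k) {ψ : F → ℂ}

/-- multiplication by `ψ_a`, as a linear map. -/
def mulL (ψ : F → ℂ) (a : F) : (F → CGamma Γ) →ₗ[CGamma Γ] (F → CGamma Γ) where
  toFun g := fun x => embC Γ (ψ (a * x)) * g x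
  map_add' g h := funext fun x => by simp [mul_add]
  map_smul' r g := funext fun x => by
    simp only [Pi.smul_apply, smul_eq_mul, RingHom.id_apply]
    ring

variable (hψ : S.IsGoodCharacter ψ S.one)
  (J : LFmu S μ →ₗ[CGamma Γ] CGamma Γ)
  (hJ : ∀ (f : k → ℂ) (hf : Integrable f μ) (a : F) (γ : Γ),
      J ⟨S.lift (fun u => embC Γ (f u)) a γ, liftC_mem_mu S μ hf a γ⟩
        = embC Γ (∫ u, f u ∂μ) * Xp γ)

include hψ hJ in
/-- Any element of the span of the oscillating generators which lies in `𝓛(F)` is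
annihilated by `∫^F`. -/
lemma star_main {u : F → CGamma Γ}
    (hu : u ∈ Submodule.span (CGamma Γ) (G1set S μ ψ)) (humem : u ∈ LFmu S μ) :
    J ⟨u, humem⟩ = 0 := by
  classical
  rw [Submodule.mem_span_set] at hu
  obtain ⟨c, hsup, hsum⟩ := hu
  have hch : ∀ g ∈ G1set S μ ψ, ∃ (a b : F) (γ : Γ) (f : k → ℂ), a ≠ 0 ∧
      Integrable f μ ∧ S.ν a + γ + S.one ≤ 0 ∧
      g = fun x => embC Γ (ψ (a * x)) * S.lift (fun u => embC Γ (f u)) b γ x :=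
    fun g hg => hg
  choose! A B Gm Ff h1 h2 h3 h4 using hch
  have hrw : (c.sum fun mi r => r • mi) = ∑ g ∈ c.support, c g •
      (fun x => embC Γ (ψ (A g * x)) * S.lift (fun u => embC Γ (Ff g u)) (B g) (Gm g) x) := by
    rw [Finsupp.sum]
    exact Finset.sum_congr rfl fun g hg => by rw [← h4 g (hsup hg)]
  have humem' : (∑ g ∈ c.support, c g •
      (fun x => embC Γ (ψ (A g * x)) * S.lift (fun u => embC Γ (Ff g u)) (B g) (Gm g) x))
      ∈ LFmu S μ := by rw [← hrw, hsum]; exact humem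
  have hz := star_aux S μ hψ J hJ c.support.card c.support A B Gm Ff c le_rfl
    (fun i hi => ⟨h1 i (hsup hi), h2 i (hsup hi), h3 i (hsup hi)⟩) humem'
  rw [Jcongr J (by rw [← hsum]; exact hrw) humem humem']
  exact hz

include hψ in
lemma liftGen_subset_LFpsi : liftGen S μ ⊆ (LFpsi S μ ψ : Set (F → CGamma Γ)) := by
  intro ℓ hℓ
  exact Submodule.subset_span ⟨ℓ, Submodule.subset_span hℓ, 0, (mul_psi_zero S hψ ℓ).symm⟩

lemma G1set_subset_LFpsi : G1set S μ ψ ⊆ (LFpsi S μ ψ : Set (F → CGamma Γ)) := by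
  rintro g ⟨a, b, γ, f, ha, hf, hm, rfl⟩
  exact Submodule.subset_span ⟨S.lift (fun u => embC Γ (f u)) b γ,
    liftC_mem_mu S μ hf b γ, a, rfl⟩

include hψ in
lemma LFmu_le_LFpsi : LFmu S μ ≤ LFpsi S μ ψ := by
  rw [LFmu_eq_span]
  exact Submodule.span_le.mpr (liftGen_subset_LFpsi S μ hψ)

include hψ in
/-- The decomposition `𝓛(F,ψ) = 𝓛(F) + span(G₁)`. -/
lemma LFpsi_eq_span : LFpsi S μ ψ
    = Submodule.span (CGamma Γ) (liftGen S μ ∪ G1set S μ ψ) := by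
  apply le_antisymm
  · refine Submodule.span_le.mpr ?_
    rintro g ⟨f, hf, a, rfl⟩
    have hf' : f ∈ Submodule.span (CGamma Γ) (liftGen S μ) := hf
    have hmap : mulL ψ a f ∈ Submodule.map (mulL (Γ := Γ) ψ a)
        (Submodule.span (CGamma Γ) (liftGen S μ)) := Submodule.mem_map_of_mem hf'
    rw [Submodule.map_span] at hmap
    have hsub : (mulL (Γ := Γ) ψ a) '' (liftGen S μ)
        ⊆ (Submodule.span (CGamma Γ) (liftGen S μ ∪ G1set S μ ψ) : Set (F → CGamma Γ)) := by
      rintro - ⟨ℓ, hℓ, rfl⟩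
      obtain ⟨f0, hf0, b, γ, rfl⟩ := hℓ
      by_cases ha : a = 0
      · subst ha
        have : mulL (Γ := Γ) ψ 0 (S.lift (fun u => embC Γ (f0 u)) b γ)
            = S.lift (fun u => embC Γ (f0 u)) b γ := mul_psi_zero S hψ _
        rw [this]
        exact Submodule.subset_span (Or.inl ⟨f0, hf0, b, γ, rfl⟩)
      · rcases le_or_gt (S.ν a + γ + S.one) 0 with hm | hm
        · exact Submodule.subset_span (Or.inr ⟨a, b, γ, f0, ha, hf0, hm, rfl⟩)
        · have hm' : 0 ≤ S.ν a + γ := by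
            have h2 := S.one_min _ hm
            have h3 := sub_le_sub_right h2 S.one
            simpa using h3
          have hmem := twist_mem S μ hψ ha hm' hf0 b
          exact Submodule.span_mono Set.subset_union_left hmem
    exact Submodule.span_le.mpr hsub hmap
  · refine Submodule.span_le.mpr ?_
    rintro g (hg | hg)
    · exact liftGen_subset_LFpsi S μ hψ hg
    · exact G1set_subset_LFpsi S μ hg

end Auxiliary6
open MeasureTheory in
set_option maxHeartbeats 2000000 in
set_option synthInstance.maxHeartbeats 400000 in
/-- Let `ψ` be a nontrivial good character of `F` of conductor `1`.  The
integral `∫^F` on `𝓛(F)` admits exactly one extension to a `ℂ(Γ)`-linear functional on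
`𝓛(F,ψ)` which is invariant under translation by elements of `F`. -/
theorem statement5
    {Γ F k : Type*} [AddCommGroup Γ] [LinearOrder Γ] [IsOrderedAddMonoid Γ] [Field F] [Field k]
    [TopologicalSpace k] [IsTopologicalRing k] [LocallyCompactSpace k]
    [MeasurableSpace k] [BorelSpace k]
    (hk_nondiscrete : ¬ IsOpen ({0} : Set k))
    (μ : Measure k) [μ.IsAddHaarMeasure]
    (S : LiftSetup Γ F k)
    (ψ : F → ℂ) (hψ : S.IsGoodCharacter ψ S.one)
    (J : LFmu S μ →ₗ[CGamma Γ] CGamma Γ)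
    (hJ : ∀ (f : k → ℂ) (hf : Integrable f μ) (a : F) (γ : Γ),
      J ⟨S.lift (fun u => embC Γ (f u)) a γ, liftC_mem_mu S μ hf a γ⟩
        = embC Γ (∫ u, f u ∂μ) * Xp γ) :
    ∃! Jext : LFpsi S μ ψ →ₗ[CGamma Γ] CGamma Γ,
      (∀ (g : F → CGamma Γ) (hg : g ∈ LFmu S μ) (hg' : g ∈ LFpsi S μ ψ),
        Jext ⟨g, hg'⟩ = J ⟨g, hg⟩) ∧
      (∀ (g : F → CGamma Γ) (hg : g ∈ LFpsi S μ ψ) (τ : F)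
        (hg' : (fun x => g (x + τ)) ∈ LFpsi S μ ψ),
        Jext ⟨fun x => g (x + τ), hg'⟩ = Jext ⟨g, hg⟩) := by
  classical
  obtain ⟨x₀, hx₀ne1, hx₀ne0, hx₀ν⟩ := exists_psi_ne_one S hψ
  set K : Submodule (CGamma Γ) (F → CGamma Γ) :=
    Submodule.span (CGamma Γ) (G1set S μ ψ) with hK
  have hle : LFmu S μ ≤ LFpsi S μ ψ := LFmu_le_LFpsi S μ hψ
  have hKle : K ≤ LFpsi S μ ψ := Submodule.span_le.mpr (G1set_subset_LFpsi S μ)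
  set K' : Submodule (CGamma Γ) (LFpsi S μ ψ) :=
    K.comap (LFpsi S μ ψ).subtype with hK'
  set π : LFpsi S μ ψ →ₗ[CGamma Γ] (LFpsi S μ ψ ⧸ K') := K'.mkQ with hπ
  set φ : LFmu S μ →ₗ[CGamma Γ] (LFpsi S μ ψ ⧸ K') :=
    π.comp (Submodule.inclusion hle) with hφ
  -- basic facts about π
  have hπ0 : ∀ (v : F → CGamma Γ) (hv : v ∈ LFpsi S μ ψ), v ∈ K → π ⟨v, hv⟩ = 0 := by
    intro v hv hvK
    rw [hπ, Submodule.mkQ_apply, Submodule.Quotient.mk_eq_zero]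
    exact hvK
  -- surjectivity of φ
  have hsurj : Function.Surjective φ := by
    intro q
    obtain ⟨⟨g, hg⟩, rfl⟩ := K'.mkQ_surjective q
    have hg2 : g ∈ Submodule.span (CGamma Γ) (liftGen S μ) ⊔ K := by
      rw [← Submodule.span_union, ← LFpsi_eq_span S μ hψ]
      exact hg
    rw [← LFmu_eq_span] at hg2
    obtain ⟨u, hu, v, hv, huv⟩ := Submodule.mem_sup.mp hg2
    refine ⟨⟨u, hu⟩, ?_⟩
    have hgdec : (⟨g, hg⟩ : LFpsi S μ ψ) = ⟨u, hle hu⟩ + ⟨v, hKle hv⟩ :=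
      Subtype.ext (by simp [← huv])
    show π (Submodule.inclusion hle ⟨u, hu⟩) = K'.mkQ ⟨g, hg⟩
    rw [show K'.mkQ = π from rfl, hgdec, map_add, hπ0 v (hKle hv) hv, add_zero]
    rfl
  -- kernel of φ is killed by J
  have hker : LinearMap.ker φ ≤ LinearMap.ker J := by
    rintro ⟨u, hu⟩ hk
    have hk2 : π ⟨u, hle hu⟩ = 0 := hk
    have huK : u ∈ K := by
      rw [hπ, Submodule.mkQ_apply, Submodule.Quotient.mk_eq_zero] at hk2
      exact hk2
    show J ⟨u, hu⟩ = 0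
    exact star_main S μ hψ J hJ huK hu
  -- the extension
  set e1 : (LFmu S μ ⧸ LinearMap.ker φ) ≃ₗ[CGamma Γ] (LFpsi S μ ψ ⧸ K') :=
    LinearMap.quotKerEquivOfSurjective φ hsurj with he1
  set Jq : (LFmu S μ ⧸ LinearMap.ker φ) →ₗ[CGamma Γ] CGamma Γ :=
    (LinearMap.ker φ).liftQ J hker with hJq
  set Jext : LFpsi S μ ψ →ₗ[CGamma Γ] CGamma Γ :=
    (Jq.comp (e1.symm : (LFpsi S μ ψ ⧸ K') ≃ₗ[CGamma Γ] (LFmu S μ ⧸ LinearMap.ker φ)).toLinearMap).comp π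
    with hJext
  -- computation of e1 on mk
  have he1mk : ∀ u : LFmu S μ, e1 (Submodule.Quotient.mk u) = φ u := by
    intro u
    rw [he1]
    simp [LinearMap.quotKerEquivOfSurjective]
  have hJextφ : ∀ u : LFmu S μ, Jext (Submodule.inclusion hle u) = J u := by
    intro u
    have h1 : π (Submodule.inclusion hle u) = φ u := rfl
    rw [hJext]
    simp only [LinearMap.comp_apply, h1]
    have h2 : e1.symm (φ u) = Submodule.Quotient.mk u := by
      rw [LinearEquiv.symm_apply_eq, he1mk]
    rw [LinearEquiv.coe_coe, h2, hJq, Submodule.liftQ_apply]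
  -- property 1
  have prop1 : ∀ (g : F → CGamma Γ) (hg : g ∈ LFmu S μ) (hg' : g ∈ LFpsi S μ ψ),
      Jext ⟨g, hg'⟩ = J ⟨g, hg⟩ := by
    intro g hg hg'
    have := hJextφ ⟨g, hg⟩
    rwa [show Submodule.inclusion hle ⟨g, hg⟩ = ⟨g, hg'⟩ from rfl] at this
  -- Jext vanishes on K
  have hJK0 : ∀ (g : F → CGamma Γ) (hg' : g ∈ LFpsi S μ ψ), g ∈ K → Jext ⟨g, hg'⟩ = 0 := by
    intro g hg' hgK
    rw [hJext]
    simp only [LinearMap.comp_apply, hπ0 g hg' hgK, map_zero]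
  -- translation invariance of Jext
  have key : ∀ (τ : F) (g : F → CGamma Γ), g ∈ LFpsi S μ ψ →
      ((fun x => g (x + τ)) ∈ LFpsi S μ ψ) ∧
      (∀ (hg2 : (fun x => g (x + τ)) ∈ LFpsi S μ ψ) (hg1 : g ∈ LFpsi S μ ψ),
        Jext ⟨fun x => g (x + τ), hg2⟩ = Jext ⟨g, hg1⟩) := by
    intro τ g hg
    rw [LFpsi_eq_span S μ hψ] at hg
    induction hg using Submodule.span_induction with
    | mem g hgm =>
      rcases hgm with hgm | hgm
      · obtain ⟨f, hf, aa, γ, rfl⟩ := hgm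
        have he : (fun x => S.lift (fun u => embC Γ (f u)) aa γ (x + τ))
            = S.lift (fun u => embC Γ (f u)) (aa - τ) γ :=
          funext fun x => S.lift_shift _ aa γ τ x
        obtain ⟨hmemt, hJt⟩ := J_translate S μ J hJ τ (liftC_mem_mu S μ hf aa γ)
        refine ⟨?_, ?_⟩
        · rw [he]
          exact hle (liftC_mem_mu S μ hf (aa - τ) γ)
        · intro hg2 hg1
          rw [prop1 _ hmemt hg2, prop1 _ (liftC_mem_mu S μ hf aa γ) hg1, hJt]
      · obtain ⟨a, b, γ, f, ha, hf, hm, rfl⟩ := hgm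
        have hshift := gen_shift S hψ a b γ f τ
        have hmemG : (fun x => embC Γ (ψ (a * x)) *
            S.lift (fun u => embC Γ (f u)) (b - τ) γ x) ∈ G1set S μ ψ :=
          ⟨a, b - τ, γ, f, ha, hf, hm, rfl⟩
        have hKt : (fun x => (fun y => embC Γ (ψ (a * y)) *
            S.lift (fun u => embC Γ (f u)) b γ y) (x + τ)) ∈ K := by
          rw [hshift]
          exact Submodule.smul_mem _ _ (Submodule.subset_span hmemG)
        refine ⟨hKle hKt, ?_⟩
        intro hg2 hg1
        rw [hJK0 _ hg2 hKt, hJK0 _ hg1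
          (Submodule.subset_span ⟨a, b, γ, f, ha, hf, hm, rfl⟩)]
    | zero =>
      refine ⟨Submodule.zero_mem _, ?_⟩
      intro hg2 hg1
      have h1 : (⟨fun x => (0 : F → CGamma Γ) (x + τ), hg2⟩ : LFpsi S μ ψ) = 0 :=
        Subtype.ext rfl
      have h2 : (⟨(0 : F → CGamma Γ), hg1⟩ : LFpsi S μ ψ) = 0 := Subtype.ext rfl
      rw [h1, h2]
    | add u v hu hv pu pv =>
      obtain ⟨hu', eu⟩ := pu
      obtain ⟨hv', ev⟩ := pv
      have huL : u ∈ LFpsi S μ ψ := by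
        rw [LFpsi_eq_span S μ hψ]; exact hu
      have hvL : v ∈ LFpsi S μ ψ := by
        rw [LFpsi_eq_span S μ hψ]; exact hv
      refine ⟨Submodule.add_mem _ hu' hv', ?_⟩
      intro hg2 hg1
      have h1 : (⟨fun x => (u + v) (x + τ), hg2⟩ : LFpsi S μ ψ)
          = ⟨fun x => u (x + τ), hu'⟩ + ⟨fun x => v (x + τ), hv'⟩ := rfl
      have h2 : (⟨u + v, hg1⟩ : LFpsi S μ ψ) = ⟨u, huL⟩ + ⟨v, hvL⟩ := rfl
      rw [h1, h2, map_add, map_add, eu _ huL, ev _ hvL]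
    | smul r u hu pu =>
      obtain ⟨hu', eu⟩ := pu
      have huL : u ∈ LFpsi S μ ψ := by
        rw [LFpsi_eq_span S μ hψ]; exact hu
      refine ⟨Submodule.smul_mem _ r hu', ?_⟩
      intro hg2 hg1
      have h1 : (⟨fun x => (r • u) (x + τ), hg2⟩ : LFpsi S μ ψ)
          = r • ⟨fun x => u (x + τ), hu'⟩ := rfl
      have h2 : (⟨r • u, hg1⟩ : LFpsi S μ ψ) = r • ⟨u, huL⟩ := rfl
      rw [h1, h2, LinearMap.map_smul, LinearMap.map_smul, eu _ huL]
  have prop2 : ∀ (g : F → CGamma Γ) (hg : g ∈ LFpsi S μ ψ) (τ : F)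
      (hg' : (fun x => g (x + τ)) ∈ LFpsi S μ ψ),
      Jext ⟨fun x => g (x + τ), hg'⟩ = Jext ⟨g, hg⟩ := by
    intro g hg τ hg'
    exact (key τ g hg).2 hg' hg
  -- any functional satisfying prop2 vanishes on G1set
  have hvanish : ∀ (J2 : LFpsi S μ ψ →ₗ[CGamma Γ] CGamma Γ),
      (∀ (g : F → CGamma Γ) (hg : g ∈ LFpsi S μ ψ) (τ : F)
        (hg' : (fun x => g (x + τ)) ∈ LFpsi S μ ψ),
        J2 ⟨fun x => g (x + τ), hg'⟩ = J2 ⟨g, hg⟩) →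
      ∀ g ∈ G1set S μ ψ, ∀ hg : g ∈ LFpsi S μ ψ, J2 ⟨g, hg⟩ = 0 := by
    rintro J2 h2 g ⟨a, b, γ, f, ha, hf, hm, rfl⟩ hg
    set w : F := x₀ * a⁻¹ with hw
    have hwne : w ≠ 0 := mul_ne_zero hx₀ne0 (inv_ne_zero ha)
    have hwv : S.ν w = S.ν x₀ - S.ν a := by
      rw [hw, S.ν_mul _ _ hx₀ne0 (inv_ne_zero ha), S.nu_inv ha, sub_eq_add_neg]
    have hsmall : γ < S.ν w := by
      have hga : γ + S.one ≤ -S.ν a := by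
        have h3 : S.ν a + (γ + S.one) ≤ 0 := by rw [← add_assoc]; exact hm
        have := add_le_add_left h3 (-S.ν a)
        simpa using this
      have h5 : -S.ν a ≤ S.ν w := by
        rw [hwv, sub_eq_add_neg]
        simpa using add_le_add_right hx₀ν (-S.ν a)
      calc γ < γ + S.one := lt_add_of_pos_right _ S.one_pos
        _ ≤ -S.ν a := hga
        _ ≤ S.ν w := h5
    have hshift := gen_small_shift S hψ a b γ f hwne hsmall
    have htr_mem : (fun x => (fun y => embC Γ (ψ (a * y)) *
        S.lift (fun u => embC Γ (f u)) b γ y) (x + w)) ∈ LFpsi S μ ψ := by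
      rw [hshift]
      exact Submodule.smul_mem _ _ hg
    have hinv := h2 _ hg w htr_mem
    have hsub : (⟨fun x => (fun y => embC Γ (ψ (a * y)) *
        S.lift (fun u => embC Γ (f u)) b γ y) (x + w), htr_mem⟩ : LFpsi S μ ψ)
        = embC Γ (ψ (a * w)) • ⟨_, hg⟩ := Subtype.ext hshift
    rw [hsub, LinearMap.map_smul, smul_eq_mul] at hinv
    have haw : a * w = x₀ := by
      rw [hw]; field_simp
    have hene : embC Γ (ψ (a * w)) - 1 ≠ 0 := by
      rw [haw]
      intro hc
      apply hx₀ne1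
      apply embC_injective (Γ := Γ)
      rw [map_one]
      exact sub_eq_zero.mp hc
    have hz : (embC Γ (ψ (a * w)) - 1) * J2 ⟨_, hg⟩ = 0 := by
      rw [sub_mul, one_mul, hinv, sub_self]
    rcases mul_eq_zero.mp hz with hc | hc
    · exact absurd hc hene
    · exact hc
  -- conclusion
  refine ⟨Jext, ⟨prop1, prop2⟩, ?_⟩
  rintro J2 ⟨h1, h2⟩
  have hagree : ∀ (g : F → CGamma Γ) (hg : g ∈ LFpsi S μ ψ), J2 ⟨g, hg⟩ = Jext ⟨g, hg⟩ := by
    intro g hg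
    have hg0 := hg
    rw [LFpsi_eq_span S μ hψ] at hg0
    induction hg0 using Submodule.span_induction with
    | mem g hgm =>
      rcases hgm with hgm | hgm
      · have hgmu : g ∈ LFmu S μ := by
          rw [LFmu_eq_span]; exact Submodule.subset_span hgm
        rw [h1 g hgmu hg, prop1 g hgmu hg]
      · rw [hvanish J2 h2 g hgm hg, hvanish Jext prop2 g hgm hg]
    | zero =>
      have h0 : (⟨(0 : F → CGamma Γ), hg⟩ : LFpsi S μ ψ) = 0 := Subtype.ext rfl
      rw [h0, map_zero, map_zero]
    | add u v hu hv pu pv =>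
      have huL : u ∈ LFpsi S μ ψ := by rw [LFpsi_eq_span S μ hψ]; exact hu
      have hvL : v ∈ LFpsi S μ ψ := by rw [LFpsi_eq_span S μ hψ]; exact hv
      have hd : (⟨u + v, hg⟩ : LFpsi S μ ψ) = ⟨u, huL⟩ + ⟨v, hvL⟩ := rfl
      rw [hd, map_add, map_add, pu huL, pv hvL]
    | smul r u hu pu =>
      have huL : u ∈ LFpsi S μ ψ := by rw [LFpsi_eq_span S μ hψ]; exact hu
      have hd : (⟨r • u, hg⟩ : LFpsi S μ ψ) = r • ⟨u, huL⟩ := rfl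
      rw [hd, LinearMap.map_smul, LinearMap.map_smul, pu huL]
  apply LinearMap.ext
  rintro ⟨g, hg⟩
  exact hagree g hg
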